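/- arXiv:1602.04436 — 4 statements merged into one kernel-verified Lean document; each statement's English description precedes it below -/
import Mathlib

section
/- Let L be a real symmetric N×N matrix with orthonormal eigenbasis φ_1, …, φ_N and corresponding real eigenvalues λ_1, …, λ_N. Let x ∈ ℂ^N and ψ, φ, c ∈ ℂ with |ψ·λ_n| < 1 for all n. Consider the ARMA₁ recursion y_{t+1} = ψ·L·y_t + φ·x, z_{t+1} = y_{t+1} + c·x with arbitrary y_0. Then z_t converges as t → ∞ to z = Σ_{n=1}^{N} (c + φ/(1 − ψλ_n)) · ⟨x, φ_n⟩ · φ_n. Equivalently, the ARMA₁ filter has graph frequency response H(λ) = c + r/(λ − p) at each eigenvalue λ = λ_n, where r = −φ/ψ and p = 1/ψ (for ψ ≠ 0). -/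
open Matrix Finset Filter

/-- **ARMA₁ graph frequency response.** Let `L` be real symmetric with orthonormal
eigenbasis `φv` and real eigenvalues `lam`, and suppose `|ψ λ_n| < 1` for all `n`.
Then the output `z_{t+1} = y_{t+1} + c x` of `y_{t+1} = ψ L y_t + φ x` converges to
`∑_n (c + φ/(1 - ψ λ_n)) ⟨x, φ_n⟩ φ_n`, and for `ψ ≠ 0` the response satisfies
`c + φ/(1 - ψ λ) = c + r/(λ - p)` with `r = -φ/ψ` and `p = 1/ψ`. -/
theorem arma1_frequency_response (N : ℕ) (L : Matrix (Fin N) (Fin N) ℝ) (hL : L.IsSymm)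
    (φv : Fin N → EuclideanSpace ℂ (Fin N)) (lam : Fin N → ℝ)
    (hON : Orthonormal ℂ φv)
    (heig : ∀ n, Matrix.toEuclideanLin (L.map Complex.ofReal) (φv n) =
      (lam n : ℂ) • φv n)
    (x : EuclideanSpace ℂ (Fin N)) (ψ φ c : ℂ)
    (hstab : ∀ n, ‖ψ * lam n‖ < 1)
    (y z : ℕ → EuclideanSpace ℂ (Fin N))
    (hy : ∀ t, y (t + 1) =
        ψ • Matrix.toEuclideanLin (L.map Complex.ofReal) (y t) + φ • x)
    (hz : ∀ t, z (t + 1) = y (t + 1) + c • x) :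
    Tendsto z atTop
      (nhds (∑ n, ((c + φ / (1 - ψ * lam n)) * (inner ℂ (φv n) x : ℂ)) • φv n)) ∧
    (ψ ≠ 0 → ∀ n, c + φ / (1 - ψ * lam n) =
      c + (-φ / ψ) / ((lam n : ℂ) - 1 / ψ)) := by
  set A := Matrix.toEuclideanLin (L.map Complex.ofReal) with hA
  -- nonvanishing denominators
  have hden : ∀ n, (1 : ℂ) - ψ * lam n ≠ 0 := by
    intro n h
    have h1 : ψ * (lam n : ℂ) = 1 := by linear_combination -h
    have h2 := hstab n
    rw [h1] at h2
    simp at h2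
  -- orthonormal basis
  have hcard : Fintype.card (Fin N) =
      Module.finrank ℂ (EuclideanSpace ℂ (Fin N)) := by simp
  have hsp : Submodule.span ℂ (Set.range φv) = ⊤ :=
    hON.linearIndependent.span_eq_top_of_card_eq_finrank' hcard
  let B : OrthonormalBasis (Fin N) ℂ (EuclideanSpace ℂ (Fin N)) :=
    OrthonormalBasis.mk hON hsp.ge
  have hB : ⇑B = φv := OrthonormalBasis.coe_mk hON hsp.ge
  have hexp : ∀ v : EuclideanSpace ℂ (Fin N),
      v = ∑ n, (inner ℂ (φv n) v : ℂ) • φv n := by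
    intro v
    conv_lhs => rw [← B.sum_repr v]
    refine Finset.sum_congr rfl fun n _ => ?_
    rw [B.repr_apply_apply, hB]
  -- fixed point
  set S : EuclideanSpace ℂ (Fin N) :=
    ∑ n, (φ / (1 - ψ * lam n) * (inner ℂ (φv n) x : ℂ)) • φv n with hS
  have hAS : ψ • A S + φ • x = S := by
    have hAsum : A S = ∑ n, ((lam n : ℂ) * (φ / (1 - ψ * lam n) * (inner ℂ (φv n) x : ℂ))) • φv n := by
      rw [hS, map_sum]
      refine Finset.sum_congr rfl fun n _ => ?_
      rw [LinearMap.map_smul, heig n, smul_smul, mul_comm]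
    rw [hAsum, hS, Finset.smul_sum]
    nth_rewrite 2 [hexp x]
    rw [Finset.smul_sum, ← Finset.sum_add_distrib]
    refine Finset.sum_congr rfl fun n _ => ?_
    rw [smul_smul, smul_smul, ← add_smul]
    congr 1
    field_simp [hden n]
    ring
  -- error recursion
  have herr : ∀ t, y (t + 1) - S = ∑ n,
      ((ψ * lam n) ^ (t + 1) * (inner ℂ (φv n) (y 0 - S) : ℂ)) • φv n := by
    intro t
    induction t with
    | zero =>
      have h0 : y 0 - S = ∑ n, (inner ℂ (φv n) (y 0 - S) : ℂ) • φv n := hexp _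
      rw [hy 0]
      nth_rewrite 1 [← hAS]
      have : ψ • A (y 0) + φ • x - (ψ • A S + φ • x) = ψ • A (y 0 - S) := by
        rw [map_sub, smul_sub]; abel
      rw [this]
      nth_rewrite 1 [h0]
      rw [map_sum, Finset.smul_sum]
      refine Finset.sum_congr rfl fun n _ => ?_
      rw [LinearMap.map_smul, heig n, smul_smul, smul_smul]
      ring_nf
    | succ t ih =>
      rw [hy (t + 1)]
      nth_rewrite 1 [← hAS]
      have h1 : ψ • A (y (t+1)) + φ • x - (ψ • A S + φ • x) = ψ • A (y (t+1) - S) := by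
        rw [map_sub, smul_sub]; abel
      rw [h1, ih, map_sum, Finset.smul_sum]
      refine Finset.sum_congr rfl fun n _ => ?_
      rw [LinearMap.map_smul, heig n, smul_smul, smul_smul]
      rw [show (ψ * lam n) ^ (t + 1 + 1) = ψ * lam n * (ψ * lam n) ^ (t + 1) by ring]
      ring_nf
  -- convergence of y
  have hy_tend : Tendsto (fun t => y (t + 1)) atTop (nhds S) := by
    have hdiff : Tendsto (fun t => y (t + 1) - S) atTop (nhds 0) := by
      have : Tendsto (fun t => ∑ n, ((ψ * lam n) ^ (t + 1) *
          (inner ℂ (φv n) (y 0 - S) : ℂ)) • φv n) atTop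
          (nhds (∑ n : Fin N, (0 : EuclideanSpace ℂ (Fin N)))) := by
        refine tendsto_finset_sum _ fun n _ => ?_
        have hpow : Tendsto (fun t : ℕ => (ψ * lam n) ^ (t + 1)) atTop (nhds 0) := by
          have := tendsto_pow_atTop_nhds_zero_of_norm_lt_one
            (x := ψ * (lam n : ℂ)) (by simpa using hstab n)
          exact this.comp (tendsto_add_atTop_nat 1)
        have : Tendsto (fun t : ℕ => ((ψ * lam n) ^ (t + 1) *
            (inner ℂ (φv n) (y 0 - S) : ℂ)) • φv n) atTop
            (nhds (((0 : ℂ) * (inner ℂ (φv n) (y 0 - S) : ℂ)) • φv n)) := by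
              exact Tendsto.smul (hpow.mul_const _) tendsto_const_nhds
        simpa using this
      simp only [Finset.sum_const_zero] at this
      exact this.congr fun t => (herr t).symm
    have := hdiff.add (tendsto_const_nhds (x := S))
    simpa using this
  -- final limit
  constructor
  · rw [← tendsto_add_atTop_iff_nat 1]
    have hzt : Tendsto (fun t => z (t + 1)) atTop (nhds (S + c • x)) := by
      have : Tendsto (fun t => y (t + 1) + c • x) atTop (nhds (S + c • x)) :=
        hy_tend.add tendsto_const_nhds
      exact this.congr fun t => (hz t).symm
    have hcx : c • x = ∑ n, (c * (inner ℂ (φv n) x : ℂ)) • φv n := by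
      nth_rewrite 1 [hexp x]
      rw [Finset.smul_sum]
      simp_rw [smul_smul]
    convert hzt using 2
    rw [hS, hcx, ← Finset.sum_add_distrib]
    refine Finset.sum_congr rfl fun n _ => ?_
    rw [← add_smul]
    ring_nf
  · intro hψ n
    congr 1
    have h2 : (lam n : ℂ) - 1 / ψ ≠ 0 := by
      intro h
      apply hden n
      have : (lam n : ℂ) = 1 / ψ := by linear_combination h
      rw [this]
      field_simp
      ring
    rw [div_eq_div_iff (hden n) h2]
    field_simp
    ring
end

section
/- Let L be a real symmetric N×N matrix with orthonormal eigenbasis φ_1, …, φ_N and eigenvalues λ_1, …, λ_N, and let ‖L‖ ≤ ϱ. Let x ∈ ℂ^N, c ∈ ℂ, and for k = 1, …, K let ψ^{(k)}, φ^{(k)} ∈ ℂ with |ψ^{(k)}|·ϱ < 1. Consider the parallel ARMA_K filter given by K parallel recursions y^{(k)}_{t+1} = ψ^{(k)}·L·y^{(k)}_t + φ^{(k)}·x (with arbitrary initial vectors y^{(k)}_0) and output z_{t+1} = Σ_{k=1}^{K} y^{(k)}_{t+1} + c·x. Then z_t converges as t → ∞ to z = c·x + Σ_{k=1}^{K} φ^{(k)}·(I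 − ψ^{(k)}L)^{−1} x = Σ_{n=1}^{N} ( c + Σ_{k=1}^{K} r_k/(λ_n − p_k) ) · ⟨x, φ_n⟩ · φ_n, where r_k = −φ^{(k)}/ψ^{(k)} and p_k = 1/ψ^{(k)} (assuming ψ^{(k)} ≠ 0), irrespective of the initial conditions. -/
open Matrix Finset Filter

set_option maxHeartbeats 1000000
set_option synthInstance.maxHeartbeats 400000

/-- **Parallel ARMA_K frequency response.** For real symmetric `L` with orthonormal
eigenbasis `φv`, eigenvalues `lam`, and spectral norm `≤ ϱ`, coefficients
`ψ⁽ᵏ⁾, φ⁽ᵏ⁾` with `|ψ⁽ᵏ⁾| ϱ < 1`, the output `z_{t+1} = ∑_k y⁽ᵏ⁾_{t+1} + c x` of the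
parallel bank `y⁽ᵏ⁾_{t+1} = ψ⁽ᵏ⁾ L y⁽ᵏ⁾_t + φ⁽ᵏ⁾ x` converges, irrespective of the
initial conditions, to `c x + ∑_k φ⁽ᵏ⁾ (I - ψ⁽ᵏ⁾L)⁻¹ x
= ∑_n (c + ∑_k r_k/(λ_n - p_k)) ⟨x, φ_n⟩ φ_n` with `r_k = -φ⁽ᵏ⁾/ψ⁽ᵏ⁾, p_k = 1/ψ⁽ᵏ⁾`. -/
theorem armaK_parallel_frequency_response (N K : ℕ)
    (L : Matrix (Fin N) (Fin N) ℝ) (hL : L.IsSymm)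
    (φv : Fin N → EuclideanSpace ℂ (Fin N)) (lam : Fin N → ℝ)
    (hON : Orthonormal ℂ φv)
    (heig : ∀ n, Matrix.toEuclideanLin (L.map Complex.ofReal) (φv n) =
      (lam n : ℂ) • φv n)
    (ϱ : ℝ) (hϱ : 0 < ϱ)
    (hnorm : ‖Matrix.toEuclideanCLM (𝕜 := ℂ) (L.map Complex.ofReal)‖ ≤ ϱ)
    (x : EuclideanSpace ℂ (Fin N)) (c : ℂ) (ψf φf : Fin K → ℂ)
    (hψ : ∀ k, ψf k ≠ 0)
    (hstab : ∀ k, ‖ψf k‖ * ϱ < 1)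
    (y : Fin K → ℕ → EuclideanSpace ℂ (Fin N)) (z : ℕ → EuclideanSpace ℂ (Fin N))
    (hy : ∀ k t, y k (t + 1) =
        ψf k • Matrix.toEuclideanLin (L.map Complex.ofReal) (y k t) + φf k • x)
    (hz : ∀ t, z (t + 1) = ∑ k, y k (t + 1) + c • x) :
    Tendsto z atTop
      (nhds (c • x + ∑ k, φf k •
        Matrix.toEuclideanLin ((1 - ψf k • L.map Complex.ofReal)⁻¹) x)) ∧
    c • x + (∑ k, φf k •
        Matrix.toEuclideanLin ((1 - ψf k • L.map Complex.ofReal)⁻¹) x) =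
      ∑ n, ((c + ∑ k, (-(φf k) / ψf k) / ((lam n : ℂ) - 1 / ψf k)) *
        (inner ℂ (φv n) x : ℂ)) • φv n := by
  have hLin : ∀ (M : Matrix (Fin N) (Fin N) ℂ) (v : EuclideanSpace ℂ (Fin N)),
      Matrix.toEuclideanLin M v = Matrix.toEuclideanCLM (𝕜 := ℂ) M v := fun M v => by
    rw [← Matrix.coe_toEuclideanCLM_eq_toEuclideanLin]; rfl
  set A : EuclideanSpace ℂ (Fin N) →L[ℂ] EuclideanSpace ℂ (Fin N) :=
    Matrix.toEuclideanCLM (𝕜 := ℂ) (L.map Complex.ofReal) with hAdef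
  have hBnorm : ∀ k, ‖ψf k • A‖ < 1 := by
    intro k
    calc ‖ψf k • A‖ ≤ ‖ψf k‖ * ‖A‖ := ContinuousLinearMap.opNorm_smul_le _ _
      _ ≤ ‖ψf k‖ * ϱ := by
          exact mul_le_mul_of_nonneg_left hnorm (norm_nonneg _)
      _ < 1 := hstab k
  have hMCLM : ∀ k, Matrix.toEuclideanCLM (𝕜 := ℂ) (1 - ψf k • L.map Complex.ofReal)
      = 1 - ψf k • A := by
    intro k
    rw [map_sub, _root_.map_one, _root_.map_smul, hAdef]
  have hMunit : ∀ k, IsUnit (1 - ψf k • L.map Complex.ofReal) := by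
    intro k
    have h : IsUnit (Matrix.toEuclideanCLM (𝕜 := ℂ) (1 - ψf k • L.map Complex.ofReal)) := by
      rw [hMCLM k]
      exact (Units.oneSub (ψf k • A) (hBnorm k)).isUnit
    have h2 := h.map (Matrix.toEuclideanCLM (n := Fin N) (𝕜 := ℂ)).symm
    simpa using h2
  have hdet : ∀ k, IsUnit (1 - ψf k • L.map Complex.ofReal).det :=
    fun k => (Matrix.isUnit_iff_isUnit_det _).1 (hMunit k)
  have happ1 : ∀ k (v : EuclideanSpace ℂ (Fin N)), (1 - ψf k • A)
      (Matrix.toEuclideanCLM (𝕜 := ℂ) ((1 - ψf k • L.map Complex.ofReal)⁻¹) v) = v := by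
    intro k v
    rw [← hMCLM k, ← ContinuousLinearMap.mul_apply, ← _root_.map_mul,
      Matrix.mul_nonsing_inv _ (hdet k), _root_.map_one, ContinuousLinearMap.one_apply]
  have happ2 : ∀ k (v : EuclideanSpace ℂ (Fin N)), Matrix.toEuclideanCLM (𝕜 := ℂ)
      ((1 - ψf k • L.map Complex.ofReal)⁻¹) ((1 - ψf k • A) v) = v := by
    intro k v
    rw [← hMCLM k, ← ContinuousLinearMap.mul_apply, ← _root_.map_mul,
      Matrix.nonsing_inv_mul _ (hdet k), _root_.map_one, ContinuousLinearMap.one_apply]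
  set w : Fin K → EuclideanSpace ℂ (Fin N) := fun k =>
    φf k • Matrix.toEuclideanCLM (𝕜 := ℂ) ((1 - ψf k • L.map Complex.ofReal)⁻¹) x with hw
  have hTfix : ∀ k, (ψf k • A) (w k) + φf k • x = w k := by
    intro k
    have h1 : (1 - ψf k • A) (w k) = φf k • x := by
      rw [hw]
      simp only [ContinuousLinearMap.map_smul]
      rw [happ1 k]
    have h2 : w k - (ψf k • A) (w k) = φf k • x := by
      simpa [ContinuousLinearMap.sub_apply, ContinuousLinearMap.one_apply] using h1
    rw [← h2]; abel
  have hcontract : ∀ k, ContractingWith ‖ψf k • A‖₊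
      (fun v => (ψf k • A) v + φf k • x) := by
    intro k
    constructor
    · exact_mod_cast hBnorm k
    · apply LipschitzWith.of_dist_le_mul
      intro u v
      simp only [dist_eq_norm, add_sub_add_right_eq_sub, ← map_sub, coe_nnnorm]
      exact (ψf k • A).le_opNorm _
  have hiter : ∀ k t, y k t = (fun v => (ψf k • A) v + φf k • x)^[t] (y k 0) := by
    intro k t
    induction t with
    | zero => rfl
    | succ t ih =>
        rw [Function.iterate_succ_apply', ← ih, hy k t, hLin]
        simp [ContinuousLinearMap.smul_apply, hAdef]
  have hyk : ∀ k, Tendsto (fun t => y k t) atTop (nhds (w k)) := by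
    intro k
    have h := (hcontract k).tendsto_iterate_fixedPoint (y k 0)
    have heq : w k = ContractingWith.fixedPoint _ (hcontract k) :=
      (hcontract k).fixedPoint_unique (hTfix k)
    rw [← heq] at h
    exact h.congr fun t => (hiter k t).symm
  have hwz : (∑ k, φf k • Matrix.toEuclideanLin ((1 - ψf k • L.map Complex.ofReal)⁻¹) x)
      = ∑ k, w k := by
    refine Finset.sum_congr rfl fun k _ => ?_
    rw [hw, hLin]
  constructor
  · have hsum : Tendsto (fun t => ∑ k, y k (t + 1)) atTop (nhds (∑ k, w k)) :=
      tendsto_finset_sum _ fun k _ => (hyk k).comp (tendsto_add_atTop_nat 1)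
    have h2 : Tendsto (fun t => z (t + 1)) atTop (nhds (∑ k, w k + c • x)) := by
      have := hsum.add (tendsto_const_nhds (x := c • x))
      exact this.congr fun t => (hz t).symm
    have h3 : Tendsto z atTop (nhds (∑ k, w k + c • x)) :=
      (tendsto_add_atTop_iff_nat 1).1 h2
    rw [hwz, add_comm (c • x)]
    exact h3
  · rcases isEmpty_or_nonempty (Fin N) with hNe | hNe
    · haveI : Subsingleton (EuclideanSpace ℂ (Fin N)) :=
        ⟨fun a b => (WithLp.ext_iff _).2 (funext fun i => (IsEmpty.false i).elim)⟩
      exact Subsingleton.elim _ _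
    · have hcard : Fintype.card (Fin N) = Module.finrank ℂ (EuclideanSpace ℂ (Fin N)) := by
        simp [finrank_euclideanSpace_fin]
      let b : OrthonormalBasis (Fin N) ℂ (EuclideanSpace ℂ (Fin N)) :=
        (basisOfOrthonormalOfCardEqFinrank hON hcard).toOrthonormalBasis
          (by rwa [coe_basisOfOrthonormalOfCardEqFinrank])
      have hb : ∀ n, b n = φv n := fun n => by
        simp [b, Module.Basis.coe_toOrthonormalBasis, coe_basisOfOrthonormalOfCardEqFinrank]
      have hxrepr : ∑ n, (inner ℂ (φv n) x : ℂ) • φv n = x := by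
        have := b.sum_repr' x
        simp_rw [hb] at this
        exact this
      have hAeig : ∀ n, A (φv n) = (lam n : ℂ) • φv n := fun n => by
        rw [hAdef, ← hLin]; exact heig n
      have hlam_le : ∀ n, |lam n| ≤ ϱ := by
        intro n
        have h1 : ‖A (φv n)‖ = |lam n| := by
          rw [hAeig n, norm_smul, hON.1 n, mul_one, Complex.norm_real, Real.norm_eq_abs]
        have h2 : ‖A (φv n)‖ ≤ ‖A‖ * ‖φv n‖ := A.le_opNorm _
        rw [hON.1 n, mul_one, h1] at h2
        exact h2.trans hnorm
      have hne : ∀ k n, (1 : ℂ) - ψf k * lam n ≠ 0 := by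
        intro k n h
        have h1 : ψf k * (lam n : ℂ) = 1 := (sub_eq_zero.mp h).symm
        have h2 : ‖ψf k‖ * |lam n| = 1 := by
          have := congrArg (fun z : ℂ => ‖z‖) h1
          simpa [norm_mul, Complex.norm_real] using this
        have h3 : ‖ψf k‖ * |lam n| ≤ ‖ψf k‖ * ϱ :=
          mul_le_mul_of_nonneg_left (hlam_le n) (norm_nonneg _)
        have := hstab k
        linarith
      have hinv_eig : ∀ k n, Matrix.toEuclideanCLM (𝕜 := ℂ)
          ((1 - ψf k • L.map Complex.ofReal)⁻¹) (φv n)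
          = ((1 : ℂ) - ψf k * lam n)⁻¹ • φv n := by
        intro k n
        have h1 : (1 - ψf k • A) (φv n)
            = ((1 : ℂ) - ψf k * lam n) • φv n := by
          rw [ContinuousLinearMap.sub_apply, ContinuousLinearMap.smul_apply,
            ContinuousLinearMap.one_apply, hAeig n, smul_smul, sub_smul, one_smul]
        have h2 := congrArg
          (Matrix.toEuclideanCLM (𝕜 := ℂ) ((1 - ψf k • L.map Complex.ofReal)⁻¹)) h1
        rw [happ2 k, ContinuousLinearMap.map_smul] at h2
        have h3 := congrArg
          (fun v : EuclideanSpace ℂ (Fin N) => ((1 : ℂ) - ψf k * lam n)⁻¹ • v) h2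
        simpa [smul_smul, inv_mul_cancel₀ (hne k n)] using h3.symm
      have hterm : ∀ k, Matrix.toEuclideanCLM (𝕜 := ℂ)
          ((1 - ψf k • L.map Complex.ofReal)⁻¹) x
          = ∑ n, (((1 : ℂ) - ψf k * lam n)⁻¹ * (inner ℂ (φv n) x : ℂ)) • φv n := by
        intro k
        conv_lhs => rw [← hxrepr]
        rw [map_sum]
        refine Finset.sum_congr rfl fun n _ => ?_
        rw [ContinuousLinearMap.map_smul, hinv_eig k n, smul_smul, mul_comm]
      have hscal : ∀ k n, (-(φf k) / ψf k) / ((lam n : ℂ) - 1 / ψf k)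
          = φf k * ((1 : ℂ) - ψf k * lam n)⁻¹ := by
        intro k n
        have h1 := hψ k
        have h2 := hne k n
        have h3 : (lam n : ℂ) - 1 / ψf k ≠ 0 := by
          intro h
          apply h2
          have h4 : (lam n : ℂ) = 1 / ψf k := sub_eq_zero.mp h
          rw [h4]
          field_simp
          norm_num
        rw [div_eq_iff h3]
        field_simp [h1, h2]
        ring
      calc c • x + ∑ k, φf k • Matrix.toEuclideanLin ((1 - ψf k • L.map Complex.ofReal)⁻¹) x
          = (∑ n, (c * (inner ℂ (φv n) x : ℂ)) • φv n)
            + ∑ n, ((∑ k, φf k * ((1 : ℂ) - ψf k * lam n)⁻¹) *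
              (inner ℂ (φv n) x : ℂ)) • φv n := by
            congr 1
            · conv_lhs => rw [← hxrepr]
              rw [Finset.smul_sum]
              exact Finset.sum_congr rfl fun n _ => smul_smul _ _ _
            · calc ∑ k, φf k • Matrix.toEuclideanLin ((1 - ψf k • L.map Complex.ofReal)⁻¹) x
                  = ∑ k, ∑ n, (φf k * (((1 : ℂ) - ψf k * lam n)⁻¹ *
                      (inner ℂ (φv n) x : ℂ))) • φv n := by
                    refine Finset.sum_congr rfl fun k _ => ?_
                    rw [hLin, hterm k, Finset.smul_sum]
                    exact Finset.sum_congr rfl fun n _ => smul_smul _ _ _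
                _ = ∑ n, ∑ k, (φf k * (((1 : ℂ) - ψf k * lam n)⁻¹ *
                      (inner ℂ (φv n) x : ℂ))) • φv n := Finset.sum_comm
                _ = ∑ n, ((∑ k, φf k * ((1 : ℂ) - ψf k * lam n)⁻¹) *
                      (inner ℂ (φv n) x : ℂ)) • φv n := by
                    refine Finset.sum_congr rfl fun n _ => ?_
                    rw [← Finset.sum_smul, Finset.sum_mul]
                    congr 1
                    exact Finset.sum_congr rfl fun k _ => by ring
        _ = ∑ n, ((c + ∑ k, (-(φf k) / ψf k) / ((lam n : ℂ) - 1 / ψf k)) *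
              (inner ℂ (φv n) x : ℂ)) • φv n := by
            rw [← Finset.sum_add_distrib]
            refine Finset.sum_congr rfl fun n _ => ?_
            have hs : (∑ k, (-(φf k) / ψf k) / ((lam n : ℂ) - 1 / ψf k))
                = ∑ k, φf k * ((1 : ℂ) - ψf k * lam n)⁻¹ :=
              Finset.sum_congr rfl fun k _ => hscal k n
            rw [hs, add_mul, add_smul]
end

section
/- Let L be a real symmetric N×N matrix with orthonormal eigenbasis φ_1, …, φ_N and eigenvalues λ_1, …, λ_N. Let x ∈ ℂ^N, c ∈ ℂ and let θ_t, ψ_t, φ_t be complex coefficient sequences, periodic with period K. Consider the periodic ARMA_K recursion y_{t+1} = (θ_t·I + ψ_t·L)·y_t + φ_t·x with arbitrary y_0, and output z_{t+1} = y_{t+1} + c·x sampled at multiples of K. Suppose that for every eigenvalue λ_n the stability condition |∏_{k=0}^{K−1} (θ_k + ψ_k·λ_n)| < 1 holds. Then the subsampled outputs z_{iK} converge as i → ∞, irrespective of y_0, to Σ_{n=1}^{N} H(λ_n)·⟨x, φ_n⟩·φ_n, where H(λ) = c + [ Σ_{k=0}^{K−1} ( ∏_{τ=k+1}^{K−1}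 (θ_τ + ψ_τ·λ) )·φ_k ] / [ 1 − ∏_{k=0}^{K−1} (θ_k + ψ_k·λ) ]. -/
open Matrix Finset Filter

private lemma geom_fixed {P C : ℂ} (hP : ‖P‖ < 1) {f : ℕ → ℂ}
    (hf : ∀ i, f (i + 1) = P * f i + C) :
    Tendsto f atTop (nhds (C / (1 - P))) := by
  have h1 : (1 : ℂ) - P ≠ 0 := by
    intro h
    have hP1 : P = 1 := by linear_combination -h
    rw [hP1] at hP; simp at hP
  have step : ∀ i, f (i + 1) - C / (1 - P) = P * (f i - C / (1 - P)) := by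
    intro i
    rw [hf i]
    field_simp
    ring
  have key : ∀ i, f i - C / (1 - P) = P ^ i * (f 0 - C / (1 - P)) := by
    intro i
    induction i with
    | zero => simp
    | succ i ih => rw [step, ih, pow_succ]; ring
  rw [← tendsto_sub_nhds_zero_iff]
  have : Tendsto (fun i => P ^ i * (f 0 - C / (1 - P))) atTop (nhds 0) := by
    simpa using (tendsto_pow_atTop_nhds_zero_of_norm_lt_one hP).mul_const _
  exact this.congr fun i => (key i).symm

/-- **Periodic ARMA_K frequency response.** Let `L` be real symmetric with orthonormal
eigenbasis `φv` and eigenvalues `lam`, and let `θ_t, ψ_t, φ_t` be `K`-periodic complex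
coefficients. Consider `y_{t+1} = (θ_t I + ψ_t L) y_t + φ_t x`, `z_{t+1} = y_{t+1} + c x`.
If `|∏_{k<K} (θ_k + ψ_k λ_n)| < 1` for every `n`, then the subsampled outputs `z_{iK}`
converge, irrespective of `y_0`, to `∑_n H(λ_n) ⟨x, φ_n⟩ φ_n` with
`H(λ) = c + (∑_{k<K} (∏_{τ=k+1}^{K-1} (θ_τ + ψ_τ λ)) φ_k) / (1 - ∏_{k<K} (θ_k + ψ_k λ))`. -/
theorem armaK_periodic_frequency_response (N K : ℕ) (hK : 0 < K)
    (L : Matrix (Fin N) (Fin N) ℝ) (hL : L.IsSymm)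
    (φv : Fin N → EuclideanSpace ℂ (Fin N)) (lam : Fin N → ℝ)
    (hON : Orthonormal ℂ φv)
    (heig : ∀ n, Matrix.toEuclideanLin (L.map Complex.ofReal) (φv n) =
      (lam n : ℂ) • φv n)
    (x : EuclideanSpace ℂ (Fin N)) (c : ℂ) (θ ψ φc : ℕ → ℂ)
    (hθ : ∀ t, θ (t + K) = θ t) (hψ : ∀ t, ψ (t + K) = ψ t)
    (hφ : ∀ t, φc (t + K) = φc t)
    (hstab : ∀ n, ‖∏ k ∈ Finset.range K, (θ k + ψ k * lam n)‖ < 1)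
    (y z : ℕ → EuclideanSpace ℂ (Fin N))
    (hy : ∀ t, y (t + 1) = θ t • y t +
        ψ t • Matrix.toEuclideanLin (L.map Complex.ofReal) (y t) + φc t • x)
    (hz : ∀ t, z (t + 1) = y (t + 1) + c • x) :
    Tendsto (fun i => z (i * K)) atTop
      (nhds (∑ n,
        ((c + (∑ k ∈ Finset.range K,
            (∏ τ ∈ Finset.Ico (k + 1) K, (θ τ + ψ τ * lam n)) * φc k) /
          (1 - ∏ k ∈ Finset.range K, (θ k + ψ k * lam n))) *
          (inner ℂ (φv n) x : ℂ)) • φv n)) := by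
  -- trivial case N = 0
  rcases Nat.eq_zero_or_pos N with hN | hN
  · subst hN
    have hsub : ∀ p q : EuclideanSpace ℂ (Fin 0), p = q := fun p q => by
      ext i; exact absurd i.2 (by omega)
    exact tendsto_const_nhds.congr fun i => hsub _ _
  -- notation
  set A := Matrix.toEuclideanLin (L.map Complex.ofReal) with hA
  set μ : Fin N → ℕ → ℂ := fun n s => θ s + ψ s * lam n with hμ
  set a : Fin N → ℕ → ℂ := fun n t => (inner ℂ (φv n) (y t) : ℂ) with ha
  set b : Fin N → ℂ := fun n => (inner ℂ (φv n) x : ℂ) with hb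
  set P : Fin N → ℂ := fun n => ∏ k ∈ Finset.range K, μ n k with hP
  set Q : Fin N → ℂ := fun n =>
    ∑ k ∈ Finset.range K, (∏ τ ∈ Finset.Ico (k + 1) K, μ n τ) * φc k with hQ
  have h1P : ∀ n, (1 : ℂ) - P n ≠ 0 := by
    intro n h
    have hP1 : P n = 1 := by linear_combination -h
    have := hstab n
    rw [show (∏ k ∈ Finset.range K, (θ k + ψ k * lam n)) = P n from rfl, hP1] at this
    simp at this
  -- self-adjointness
  have hHerm : (L.map Complex.ofReal).IsHermitian := by
    ext i j
    simp only [Matrix.conjTranspose_apply, Matrix.map_apply, Complex.star_def,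
      Complex.conj_ofReal]
    exact congrArg Complex.ofReal (hL.apply i j)
  have hSym := Matrix.isHermitian_iff_isSymmetric.mp hHerm
  have hAinner : ∀ n v, (inner ℂ (φv n) (A v) : ℂ) = (lam n : ℂ) * inner ℂ (φv n) v := by
    intro n v
    rw [← hSym (φv n) v, heig n, inner_smul_left]
    simp [Complex.conj_ofReal]
  -- coefficient recursion
  have harec : ∀ n t, a n (t + 1) = μ n t * a n t + φc t * b n := by
    intro n t
    simp only [ha, hy t, inner_add_right, inner_smul_right, hAinner, hμ, hb]
    ring
  -- iterated recursion
  have hstep : ∀ n m t, a n (t + m) = (∏ j ∈ Finset.range m, μ n (t + j)) * a n t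
      + (∑ j ∈ Finset.range m, (∏ τ ∈ Finset.Ico (j + 1) m, μ n (t + τ)) * φc (t + j)) * b n := by
    intro n m t
    induction m with
    | zero => simp
    | succ m ih =>
      have htm : t + (m + 1) = (t + m) + 1 := by ring
      rw [htm, harec, ih, Finset.prod_range_succ, Finset.sum_range_succ]
      have hIco : ∀ j ∈ Finset.range m,
          (∏ τ ∈ Finset.Ico (j + 1) (m + 1), μ n (t + τ)) * φc (t + j)
          = ((∏ τ ∈ Finset.Ico (j + 1) m, μ n (t + τ)) * φc (t + j)) * μ n (t + m) := by
        intro j hj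
        have hjm : j + 1 ≤ m := Finset.mem_range.mp hj
        rw [Finset.prod_Ico_succ_top hjm]
        ring
      rw [Finset.sum_congr rfl hIco, ← Finset.sum_mul]
      simp only [Finset.Ico_self, Finset.prod_empty, one_mul]
      ring
  -- periodicity
  have hθp : ∀ j i, θ (j + i * K) = θ j := by
    intro j i
    induction i with
    | zero => simp
    | succ i ih => rw [show j + (i + 1) * K = (j + i * K) + K by ring, hθ, ih]
  have hψp : ∀ j i, ψ (j + i * K) = ψ j := by
    intro j i
    induction i with
    | zero => simp
    | succ i ih => rw [show j + (i + 1) * K = (j + i * K) + K by ring, hψ, ih]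
  have hφp : ∀ j i, φc (j + i * K) = φc j := by
    intro j i
    induction i with
    | zero => simp
    | succ i ih => rw [show j + (i + 1) * K = (j + i * K) + K by ring, hφ, ih]
  have hμp : ∀ n j i, μ n (j + i * K) = μ n j := by
    intro n j i; simp only [hμ, hθp, hψp]
  -- one-period recursion at multiples of K
  have hper : ∀ n i, a n ((i + 1) * K) = P n * a n (i * K) + Q n * b n := by
    intro n i
    have h1 : (i + 1) * K = i * K + K := by ring
    rw [h1, hstep n K (i * K)]
    congr 2
    · exact Finset.prod_congr rfl fun j _ => by rw [add_comm (i * K) j, hμp]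
    · refine Finset.sum_congr rfl fun j _ => ?_
      congr 1
      · exact Finset.prod_congr rfl fun τ _ => by rw [add_comm (i * K) τ, hμp]
      · rw [add_comm (i * K) j, hφp]
  -- scalar limits
  have hlim : ∀ n, Tendsto (fun i => a n (i * K)) atTop
      (nhds (Q n * b n / (1 - P n))) := by
    intro n
    refine geom_fixed ?_ (fun i => by rw [show (i + 1) * K = (i + 1) * K from rfl, hper])
    exact hstab n
  -- orthonormal basis expansion
  have hcard : Fintype.card (Fin N) = Module.finrank ℂ (EuclideanSpace ℂ (Fin N)) := by
    simp
  haveI : Nonempty (Fin N) := ⟨⟨0, hN⟩⟩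
  have hsp : ⊤ ≤ Submodule.span ℂ (Set.range φv) := by
    have h := (basisOfOrthonormalOfCardEqFinrank hON hcard).span_eq
    rw [coe_basisOfOrthonormalOfCardEqFinrank] at h
    exact h.ge
  set B : OrthonormalBasis (Fin N) ℂ (EuclideanSpace ℂ (Fin N)) :=
    OrthonormalBasis.mk hON hsp with hB
  have hexp : ∀ v : EuclideanSpace ℂ (Fin N),
      ∑ n, (inner ℂ (φv n) v : ℂ) • φv n = v := by
    intro v
    have h := B.sum_repr' v
    simpa [hB, OrthonormalBasis.coe_mk] using h
  -- assemble
  have hcomb : ∀ i, y (i * K) + c • x = ∑ n, (a n (i * K) + c * b n) • φv n := by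
    intro i
    conv_lhs => rw [← hexp (y (i * K)), ← hexp x]
    rw [Finset.smul_sum, ← Finset.sum_add_distrib]
    exact Finset.sum_congr rfl fun n _ => by
      rw [add_smul, smul_smul]
  have hmain : Tendsto (fun i => y (i * K) + c • x) atTop
      (nhds (∑ n,
        ((c + Q n / (1 - P n)) * b n) • φv n)) := by
    have h1 : Tendsto (fun i => ∑ n, (a n (i * K) + c * b n) • φv n) atTop
        (nhds (∑ n, ((c + Q n / (1 - P n)) * b n) • φv n)) := by
      refine tendsto_finset_sum _ fun n _ => ?_
      have h2 := ((hlim n).add_const (c * b n)).smul_const (φv n)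
      convert h2 using 2
      field_simp
      ring
    exact h1.congr fun i => (hcomb i).symm
  refine hmain.congr' ?_
  filter_upwards [eventually_ge_atTop 1] with i hi
  have hiK : 1 ≤ i * K := Nat.one_le_iff_ne_zero.mpr (Nat.mul_ne_zero (by omega) (by omega))
  obtain ⟨m, hm⟩ : ∃ m, i * K = m + 1 := ⟨i * K - 1, by omega⟩
  rw [hm, hz m]
end

section
/- Let w > 0 and K ∈ {1, 2}, and for k = 1, …, K set γ_k = (2k+1)π/K and define the pole p_k = −1 + e^{iγ_k}/w^{1/K} ∈ ℂ (with w^{1/K} the positive real K-th root of w). Then |p_k| > 1 for every k; equivalently, the stability condition 2·cos(γ_k)·w^{1/K} < 1 holds for all k, so the Tikhonov-denoising ARMA_K graph filter on the shifted normalized Laplacian (whose spectral radius bound is ϱ = 1) is stable for every regularization weight w > 0 when K = 1 or K = 2. -/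
lemma expI_real (x : ℝ) :
    Complex.exp (Complex.I * (x:ℂ)) = ↑(Real.cos x) + ↑(Real.sin x) * Complex.I := by
  rw [mul_comm, Complex.exp_mul_I, Complex.ofReal_cos, Complex.ofReal_sin]

lemma abs_sq_real (a b : ℝ) : ‖((a:ℂ) + (b:ℂ) * Complex.I)‖ ^ 2 = a^2 + b^2 := by
  rw [Complex.sq_norm, Complex.normSq_add_mul_I]

lemma cos3pi : Real.cos (3 * Real.pi) = -1 := by
  have : (3:ℝ) * Real.pi = Real.pi + 2*Real.pi := by ring
  rw [this, Real.cos_add_two_pi, Real.cos_pi]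

lemma sin3pi : Real.sin (3 * Real.pi) = 0 := by
  have : (3:ℝ) * Real.pi = Real.pi + 2*Real.pi := by ring
  rw [this, Real.sin_add_two_pi, Real.sin_pi]

lemma cos3pi2 : Real.cos (3 * Real.pi / 2) = 0 := by
  have : (3:ℝ) * Real.pi / 2 = Real.pi/2 + Real.pi := by ring
  rw [this, Real.cos_add_pi, Real.cos_pi_div_two, neg_zero]

lemma sin3pi2 : Real.sin (3 * Real.pi / 2) = -1 := by
  have : (3:ℝ) * Real.pi / 2 = Real.pi/2 + Real.pi := by ring
  rw [this, Real.sin_add_pi, Real.sin_pi_div_two]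

lemma cos5pi2 : Real.cos (5 * Real.pi / 2) = 0 := by
  have : (5:ℝ) * Real.pi / 2 = Real.pi/2 + 2*Real.pi := by ring
  rw [this, Real.cos_add_two_pi, Real.cos_pi_div_two]

lemma sin5pi2 : Real.sin (5 * Real.pi / 2) = 1 := by
  have : (5:ℝ) * Real.pi / 2 = Real.pi/2 + 2*Real.pi := by ring
  rw [this, Real.sin_add_two_pi, Real.sin_pi_div_two]

lemma one_lt_abs_of_sq {z : ℂ} {c : ℝ} (hc : 0 < c)
    (h : ‖z‖ ^ 2 = 1 + c) : 1 < ‖z‖ := by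
  nlinarith [norm_nonneg z]

/-- **Stability of Tikhonov-denoising ARMA_K on the shifted normalized Laplacian.**
For `w > 0` and `K ∈ {1, 2}`, the poles `p_k = -1 + e^{iγ_k}/w^{1/K}` with
`γ_k = (2k+1)π/K` satisfy `|p_k| > 1` for all `k = 1, …, K`; equivalently the
stability condition `2 cos(γ_k) w^{1/K} < 1` holds, so the filter is stable on the
shifted normalized Laplacian (spectral radius bound `ϱ = 1`) for every `w > 0`. -/
theorem tikhonov_armaK_stable (w : ℝ) (hw : 0 < w) (K : ℕ) (hK : K = 1 ∨ K = 2) :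
    ∀ k : ℕ, 1 ≤ k → k ≤ K →
      1 < ‖-1 +
          Complex.exp (Complex.I * (((2 * k + 1) * Real.pi / K : ℝ) : ℂ)) /
            ((w ^ (1 / (K : ℝ)) : ℝ) : ℂ)‖ ∧
      2 * Real.cos ((2 * k + 1) * Real.pi / K) * w ^ (1 / (K : ℝ)) < 1 := by
  intro k hk1 hkK
  rcases hK with rfl | rfl
  · -- K = 1
    interval_cases k
    have hr : w ^ (1 / ((1:ℕ) : ℝ)) = w := by norm_num
    have hγ : ((2 * (1:ℕ) + 1) * Real.pi / ((1:ℕ):ℝ) : ℝ) = 3 * Real.pi := by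
      push_cast; ring
    rw [hγ, hr, expI_real, cos3pi, sin3pi]
    constructor
    · have hz : (-1 + (↑(-1:ℝ) + ↑(0:ℝ) * Complex.I) / ((w:ℝ):ℂ) : ℂ)
          = ↑(-1 - 1/w) + ↑(0:ℝ) * Complex.I := by
        have hw0 : (w:ℂ) ≠ 0 := by exact_mod_cast hw.ne'
        push_cast
        field_simp
        ring
      rw [hz]
      refine one_lt_abs_of_sq (c := 2/w + 1/w^2) (by positivity) ?_
      rw [abs_sq_real]
      field_simp
      ring
    · nlinarith
  · -- K = 2
    have hr : 0 < w ^ (1 / ((2:ℕ) : ℝ)) := Real.rpow_pos_of_pos hw _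
    set r := w ^ (1 / ((2:ℕ) : ℝ)) with hrdef
    have hrne : (r:ℂ) ≠ 0 := by exact_mod_cast hr.ne'
    interval_cases k
    · have hγ : ((2 * (1:ℕ) + 1) * Real.pi / ((2:ℕ):ℝ) : ℝ) = 3 * Real.pi / 2 := by
        push_cast; ring
      rw [hγ, expI_real, cos3pi2, sin3pi2]
      constructor
      · have hz : (-1 + (↑(0:ℝ) + ↑(-1:ℝ) * Complex.I) / ((r:ℝ):ℂ) : ℂ)
            = ↑(-1:ℝ) + ↑(-(1/r)) * Complex.I := by
          push_cast; field_simp; ring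
        rw [hz]
        refine one_lt_abs_of_sq (c := 1/r^2) (by positivity) ?_
        rw [abs_sq_real]; field_simp
      · simp
    · have hγ : ((2 * (2:ℕ) + 1) * Real.pi / ((2:ℕ):ℝ) : ℝ) = 5 * Real.pi / 2 := by
        push_cast; ring
      rw [hγ, expI_real, cos5pi2, sin5pi2]
      constructor
      · have hz : (-1 + (↑(0:ℝ) + ↑(1:ℝ) * Complex.I) / ((r:ℝ):ℂ) : ℂ)
            = ↑(-1:ℝ) + ↑(1/r) * Complex.I := by
          push_cast; field_simp; ring
        rw [hz]
        refine one_lt_abs_of_sq (c := 1/r^2) (by positivity) ?_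
        rw [abs_sq_real]; field_simp
      · simp
end
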